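/- arXiv:math-ph/0205007 — 2 statements merged into one kernel-verified Lean document; each statement's English description precedes it below -/
import Mathlib

section
/- For any partition κ, the product over nodes (i,j) of κ of (2(a(i,j)+1)+l(i,j)) times the product of (2a(i,j)+l(i,j)+1) equals the product over nodes of the partition 2κ (obtained by doubling each part) of (a'(i,j)+l'(i,j)+1), where a, l denote arm and leg lengths in κ and a', l' denote arm and leg lengths in 2κ. Equivalently, (h_κ d'_κ)|_{α=2} = d_{2κ}|_{α=1}. -/
/-- Arm length of a cell in a Young diagram: number of cells in the same row strictly
to the right. -/
def armLength (μ : YoungDiagram) (c : ℕ × ℕ) : ℕ :=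
  (μ.cells.filter fun d => d.1 = c.1 ∧ c.2 < d.2).card

/-- Leg length of a cell in a Young diagram: number of cells in the same column strictly
below. -/
def legLength (μ : YoungDiagram) (c : ℕ × ℕ) : ℕ :=
  (μ.cells.filter fun d => d.2 = c.2 ∧ c.1 < d.1).card

/-- d'_κ(α) = ∏_{(i,j)∈κ} (α(a(i,j)+1) + l(i,j)). -/
noncomputable def dPrime (α : ℚ) (μ : YoungDiagram) : ℚ :=
  ∏ c ∈ μ.cells, (α * (armLength μ c + 1) + legLength μ c)

/-- h_κ(α) = ∏_{(i,j)∈κ} (α a(i,j) + l(i,j) + 1). -/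
noncomputable def hProd (α : ℚ) (μ : YoungDiagram) : ℚ :=
  ∏ c ∈ μ.cells, (α * armLength μ c + legLength μ c + 1)

lemma armLength_eq (μ : YoungDiagram) (i j : ℕ) :
    armLength μ (i, j) = μ.rowLen i - (j + 1) := by
  unfold armLength
  have : (μ.cells.filter fun d => d.1 = i ∧ j < d.2)
      = (Finset.Ioo j (μ.rowLen i)).image (fun j' => (i, j')) := by
    ext ⟨a, b⟩
    simp only [Finset.mem_filter, Finset.mem_image, Finset.mem_Ioo,
      YoungDiagram.mem_cells]
    constructor
    · rintro ⟨hm, rfl, hj⟩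
      exact ⟨b, ⟨hj, YoungDiagram.mem_iff_lt_rowLen.mp hm⟩, rfl⟩
    · rintro ⟨j', ⟨h1, h2⟩, h3⟩
      obtain ⟨rfl, rfl⟩ := Prod.mk.injEq .. ▸ h3
      exact ⟨YoungDiagram.mem_iff_lt_rowLen.mpr h2, rfl, h1⟩
  rw [this, Finset.card_image_of_injective _ (fun a b h => by simpa using h),
    Nat.card_Ioo]
  omega

lemma legLength_eq (μ : YoungDiagram) (i j : ℕ) :
    legLength μ (i, j) = μ.colLen j - (i + 1) := by
  unfold legLength
  have : (μ.cells.filter fun d => d.2 = j ∧ i < d.1)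
      = (Finset.Ioo i (μ.colLen j)).image (fun i' => (i', j)) := by
    ext ⟨a, b⟩
    simp only [Finset.mem_filter, Finset.mem_image, Finset.mem_Ioo,
      YoungDiagram.mem_cells]
    constructor
    · rintro ⟨hm, rfl, hi⟩
      exact ⟨a, ⟨hi, YoungDiagram.mem_iff_lt_colLen.mp hm⟩, rfl⟩
    · rintro ⟨i', ⟨h1, h2⟩, h3⟩
      obtain ⟨rfl, rfl⟩ := Prod.mk.injEq .. ▸ h3
      exact ⟨YoungDiagram.mem_iff_lt_colLen.mpr h2, rfl, h1⟩
  rw [this, Finset.card_image_of_injective _ (fun a b h => by simpa using h),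
    Nat.card_Ioo]
  omega

/-- (h_κ d'_κ)|_{α=2} = d_{2κ}|_{α=1}, where 2κ doubles each part of κ. -/
theorem hd_alpha_two_eq_d_doubled (μ ν : YoungDiagram)
    (hν : ∀ i j : ℕ, (i, j) ∈ ν ↔ j < 2 * μ.rowLen i) :
    hProd 2 μ * dPrime 2 μ = dPrime 1 ν := by
  have hr : ∀ i, ν.rowLen i = 2 * μ.rowLen i := by
    intro i
    have H : ∀ j, j < ν.rowLen i ↔ j < 2 * μ.rowLen i := fun j =>
      (YoungDiagram.mem_iff_lt_rowLen).symm.trans (hν i j)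
    have h1 := H (ν.rowLen i)
    have h2 := H (2 * μ.rowLen i)
    omega
  have hc : ∀ i j, i < ν.colLen j ↔ j < 2 * μ.rowLen i := by
    intro i j
    rw [← YoungDiagram.mem_iff_lt_colLen, hν]
  have hcol : ∀ j k, k ≤ 1 → ν.colLen (2 * j + k) = μ.colLen j := by
    intro j k hk
    have H : ∀ i, i < ν.colLen (2 * j + k) ↔ i < μ.colLen j := by
      intro i
      rw [hc, ← YoungDiagram.mem_iff_lt_colLen, YoungDiagram.mem_iff_lt_rowLen]
      omega
    have h1 := H (ν.colLen (2 * j + k))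
    have h2 := H (μ.colLen j)
    omega
  rw [hProd, dPrime, dPrime, ← Finset.prod_mul_distrib]
  have key : ∏ c ∈ ν.cells, ((1 : ℚ) * (armLength ν c + 1) + legLength ν c)
      = ∏ p ∈ μ.cells ×ˢ ({0, 1} : Finset ℕ),
          ((1 : ℚ) * (armLength ν (p.1.1, 2 * p.1.2 + p.2) + 1)
            + legLength ν (p.1.1, 2 * p.1.2 + p.2)) := by
    refine Finset.prod_nbij' (fun c => ((c.1, c.2 / 2), c.2 % 2))
      (fun p => (p.1.1, 2 * p.1.2 + p.2)) ?_ ?_ ?_ ?_ ?_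
    · rintro ⟨a, b⟩ hm
      rw [YoungDiagram.mem_cells, YoungDiagram.mem_iff_lt_rowLen] at hm
      rw [hr] at hm
      simp only [Finset.mem_product, YoungDiagram.mem_cells,
        YoungDiagram.mem_iff_lt_rowLen, Finset.mem_insert, Finset.mem_singleton]
      omega
    · rintro ⟨⟨a, b⟩, k⟩ hm
      simp only [Finset.mem_product, YoungDiagram.mem_cells,
        YoungDiagram.mem_iff_lt_rowLen, Finset.mem_insert, Finset.mem_singleton] at hm
      dsimp only
      rw [YoungDiagram.mem_cells, YoungDiagram.mem_iff_lt_rowLen, hr]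
      omega
    · rintro ⟨a, b⟩ _
      dsimp only
      simp only [Prod.mk.injEq, true_and]
      omega
    · rintro ⟨⟨a, b⟩, k⟩ hm
      obtain ⟨-, hk⟩ := Finset.mem_product.mp hm
      simp only [Finset.mem_insert, Finset.mem_singleton] at hk
      dsimp only
      simp only [Prod.mk.injEq, true_and]
      omega
    · rintro ⟨a, b⟩ hm
      dsimp only
      have hb : 2 * (b / 2) + b % 2 = b := by omega
      rw [hb]
  rw [key, Finset.prod_product]
  refine Finset.prod_congr rfl ?_
  rintro ⟨i, j⟩ hm
  rw [YoungDiagram.mem_cells, YoungDiagram.mem_iff_lt_rowLen] at hm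
  have hcl : i < μ.colLen j := by
    rw [← YoungDiagram.mem_iff_lt_colLen, YoungDiagram.mem_iff_lt_rowLen]; exact hm
  rw [Finset.prod_pair (by norm_num)]
  simp only [armLength_eq, legLength_eq, hr, hcol j 0 (by norm_num),
    hcol j 1 (by norm_num)]
  rw [Nat.cast_sub (by omega : j + 1 ≤ μ.rowLen i),
    Nat.cast_sub (by omega : i + 1 ≤ μ.colLen j),
    Nat.cast_sub (by omega : 2 * j + 0 + 1 ≤ 2 * μ.rowLen i),
    Nat.cast_sub (by omega : 2 * j + 1 + 1 ≤ 2 * μ.rowLen i)]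
  push_cast
  ring
end

section
/- For any partition κ, 2^{2|κ|} times the product (h_κ d'_κ) evaluated at α=1/2 equals d'_{κ²} evaluated at α=1, where κ² is the partition obtained by repeating each part of κ twice. Equivalently, 2^{2|κ|} (h_κ d'_κ)|_{α=1/2} = d_{κ²}|_{α=1}. -/
/-- 2^{2|κ|} (h_κ d'_κ)|_{α=1/2} = d_{κ²}|_{α=1}, where κ² repeats each part of κ twice. -/
theorem hd_alpha_half_eq_d_squared (μ ν : YoungDiagram)
    (hν : ∀ i j : ℕ, (i, j) ∈ ν ↔ j < μ.rowLen (i / 2)) :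
    (2 : ℚ) ^ (2 * μ.card) * (hProd (1/2) μ * dPrime (1/2) μ) = dPrime 1 ν := by
  have hrow : ∀ r, ν.rowLen r = μ.rowLen (r / 2) := by
    intro r
    have h := fun jj => (YoungDiagram.mem_iff_lt_rowLen (μ := ν) (i := r) (j := jj)).symm.trans (hν r jj)
    have h1 := h (ν.rowLen r); have h2 := h (μ.rowLen (r / 2)); omega
  have hcol : ∀ j, ν.colLen j = 2 * μ.colLen j := by
    intro j
    have h : ∀ k, k < ν.colLen j ↔ k < 2 * μ.colLen j := by
      intro k
      rw [← YoungDiagram.mem_iff_lt_colLen, hν k j, ← YoungDiagram.mem_iff_lt_rowLen,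
        YoungDiagram.mem_iff_lt_colLen]
      omega
    have h1 := h (ν.colLen j); have h2 := h (2 * μ.colLen j); omega
  -- decompose ν.cells
  have hcells : ν.cells = (μ.cells.image fun c => (2 * c.1, c.2)) ∪
      (μ.cells.image fun c => (2 * c.1 + 1, c.2)) := by
    ext ⟨r, j⟩
    simp only [Finset.mem_union, Finset.mem_image, YoungDiagram.mem_cells,
      Prod.mk.injEq, Prod.exists]
    rw [hν r j, ← YoungDiagram.mem_iff_lt_rowLen]
    constructor
    · intro h
      rcases Nat.even_or_odd r with ⟨i, hi⟩ | ⟨i, hi⟩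
      · exact Or.inl ⟨i, j, by rwa [show r / 2 = i by omega] at h, by omega, rfl⟩
      · exact Or.inr ⟨i, j, by rwa [show r / 2 = i by omega] at h, by omega, rfl⟩
    · rintro (⟨i, jj, hm, hr, rfl⟩ | ⟨i, jj, hm, hr, rfl⟩) <;>
        · rw [show r / 2 = i by omega]; exact hm
  have hdisj : Disjoint (μ.cells.image fun c => (2 * c.1, c.2))
      (μ.cells.image fun c => (2 * c.1 + 1, c.2)) := by
    rw [Finset.disjoint_left]
    rintro ⟨r, j⟩ h1 h2
    simp only [Finset.mem_image, Prod.mk.injEq, Prod.exists] at h1 h2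
    obtain ⟨a, b, _, ha, _⟩ := h1
    obtain ⟨a', b', _, ha', _⟩ := h2
    omega
  have hinj0 : Set.InjOn (fun c : ℕ × ℕ => (2 * c.1, c.2)) μ.cells := by
    rintro ⟨a, b⟩ _ ⟨a', b'⟩ _ h
    simp only [Prod.mk.injEq] at h
    exact Prod.ext (by omega) h.2
  have hinj1 : Set.InjOn (fun c : ℕ × ℕ => (2 * c.1 + 1, c.2)) μ.cells := by
    rintro ⟨a, b⟩ _ ⟨a', b'⟩ _ h
    simp only [Prod.mk.injEq] at h
    exact Prod.ext (by omega) h.2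
  simp only [hProd, dPrime]
  rw [hcells, Finset.prod_union hdisj, Finset.prod_image hinj0, Finset.prod_image hinj1,
    ← Finset.prod_mul_distrib, ← Finset.prod_mul_distrib, pow_mul,
    ← Finset.prod_const ((2:ℚ) ^ 2) (s := μ.cells), ← Finset.prod_mul_distrib]
  apply Finset.prod_congr rfl
  rintro ⟨i, j⟩ hc
  rw [YoungDiagram.mem_cells] at hc
  have hA : j + 1 ≤ μ.rowLen i := YoungDiagram.mem_iff_lt_rowLen.mp hc
  have hL : i + 1 ≤ μ.colLen j := YoungDiagram.mem_iff_lt_colLen.mp hc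
  simp only [armLength_eq, legLength_eq, hrow, hcol]
  rw [show (2 * i) / 2 = i by omega, show (2 * i + 1) / 2 = i by omega,
    show 2 * μ.colLen j - (2 * i + 1) = 2 * (μ.colLen j - (i + 1)) + 1 by omega,
    show 2 * μ.colLen j - (2 * i + 1 + 1) = 2 * (μ.colLen j - (i + 1)) by omega]
  push_cast
  ring
end
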